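/- Let α, β : Fin d → (Fin d → ℂ) be arbitrary families of vectors, and let x be the vector indexed by Fin d × (Fin d × Fin d) defined by x (i,(p,q)) = α_i(p) · β_i(q). Then ⟨x, A x⟩ = Σ_{s,s'} conj(x s) · A[s, s'] · x s' equals 0 if and only if for every i : Fin d, α_i = 0 or β_i = 0. (This is the matrix-theoretic core of Lemma 3: two pure inputs to a single use of the channel N_d have exactly orthogonal outputs iff for each computational-basis index at most one of the corresponding component vectors is nonzero.) -/

import Mathlib

open Matrix Kronecker

/-- Projector onto the maximally entangled state: Φ[(i,j),(k,l)] = 1/d if i=j and k=l. -/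
noncomputable def Phi (d : ℕ) : Matrix (Fin d × Fin d) (Fin d × Fin d) ℂ :=
  fun p q => if p.1 = p.2 ∧ q.1 = q.2 then ((d : ℂ))⁻¹ else 0

/-- Coefficients a i k: 1 on the diagonal, -1/(d²-1) off the diagonal. -/
noncomputable def aCoef (d : ℕ) (i k : Fin d) : ℝ :=
  if i = k then 1 else -1 / ((d : ℝ) ^ 2 - 1)

/-- The matrix A = Σ_{i,k} E_{ik} ⊗ₖ (a i k • (I − Φ) + Φ). -/
noncomputable def Amat (d : ℕ) : Matrix (Fin d × (Fin d × Fin d)) (Fin d × (Fin d × Fin d)) ℂ :=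
  ∑ i : Fin d, ∑ k : Fin d,
    (Matrix.single i k (1 : ℂ)) ⊗ₖ
      (aCoef d i k • ((1 : Matrix (Fin d × Fin d) (Fin d × Fin d) ℂ) - Phi d) + Phi d)

lemma amat_apply (d : ℕ) (i k : Fin d) (s t : Fin d × Fin d) :
    Amat d (i, s) (k, t) =
      (aCoef d i k : ℂ) * ((if s = t then 1 else 0) - Phi d s t) + Phi d s t := by
  simp only [Amat, Matrix.sum_apply, Matrix.kroneckerMap_apply, Matrix.single,
    Matrix.of_apply, Matrix.add_apply, Matrix.smul_apply, Matrix.sub_apply, Matrix.one_apply,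
    ite_mul, one_mul, zero_mul, smul_eq_mul]
  rw [Finset.sum_eq_single i]
  · rw [Finset.sum_eq_single k] <;> simp +contextual [Complex.real_smul]
  · intro b _ hb; rw [Finset.sum_eq_zero]; intro k' _; simp [hb]
  · simp

section aux
variable {d : ℕ} (α β : Fin d → (Fin d → ℂ))

local notation "conj'" => (starRingEnd ℂ)

noncomputable def cc (i : Fin d) : ℂ := ∑ p, α i p * β i p
noncomputable def vv (i : Fin d) (s : Fin d × Fin d) : ℂ := α i s.1 * β i s.2
noncomputable def Pv (i : Fin d) (s : Fin d × Fin d) : ℂ :=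
  vv α β i s - (if s.1 = s.2 then cc α β i / d else 0)
noncomputable def TT (i k : Fin d) : ℂ :=
  (∑ p, conj' (α i p) * α k p) * (∑ q, conj' (β i q) * β k q)

lemma sum_conj_vv (i k : Fin d) :
    ∑ s : Fin d × Fin d, conj' (vv α β i s) * vv α β k s = TT α β i k := by
  rw [TT, Finset.sum_mul_sum, Fintype.sum_prod_type]
  refine Finset.sum_congr rfl fun p _ => Finset.sum_congr rfl fun q _ => ?_
  simp only [vv, _root_.map_mul]; ring

lemma sum_diag_vv (i : Fin d) :
    ∑ s : Fin d × Fin d, (if s.1 = s.2 then vv α β i s else 0) = cc α β i := by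
  rw [Fintype.sum_prod_type, cc]
  refine Finset.sum_congr rfl fun p _ => ?_
  simp [vv]

lemma sum_diag_conj (i : Fin d) :
    ∑ s : Fin d × Fin d, (if s.1 = s.2 then conj' (vv α β i s) else 0)
      = conj' (cc α β i) := by
  rw [← sum_diag_vv α β i, map_sum]
  refine Finset.sum_congr rfl fun s _ => ?_
  rw [apply_ite conj', map_zero]

lemma sum_phi (i k : Fin d) :
    ∑ s : Fin d × Fin d, ∑ t : Fin d × Fin d,
      conj' (vv α β i s) * Phi d s t * vv α β k t = conj' (cc α β i) * cc α β k / d := by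
  have h1 : ∀ s : Fin d × Fin d, ∑ t : Fin d × Fin d, conj' (vv α β i s) * Phi d s t * vv α β k t
      = (if s.1 = s.2 then conj' (vv α β i s) else 0) * (d : ℂ)⁻¹ * cc α β k := by
    intro s
    rw [← sum_diag_vv α β k, Finset.mul_sum]
    refine Finset.sum_congr rfl fun t _ => ?_
    simp only [Phi]
    by_cases h : s.1 = s.2 <;> by_cases h' : t.1 = t.2 <;> simp [h, h'] <;> ring
  rw [Finset.sum_congr rfl (fun s _ => h1 s), ← Finset.sum_mul, ← Finset.sum_mul,
    sum_diag_conj]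
  ring

lemma block_sum (i k : Fin d) :
    ∑ s : Fin d × Fin d, ∑ t : Fin d × Fin d,
      conj' (vv α β i s) * Amat d (i, s) (k, t) * vv α β k t
    = (aCoef d i k : ℂ) * (TT α β i k - conj' (cc α β i) * cc α β k / d)
        + conj' (cc α β i) * cc α β k / d := by
  have expand : ∀ s t : Fin d × Fin d,
      conj' (vv α β i s) * Amat d (i, s) (k, t) * vv α β k t
      = (aCoef d i k : ℂ) * ((if s = t then conj' (vv α β i s) * vv α β k t else 0)
          - conj' (vv α β i s) * Phi d s t * vv α β k t)
        + conj' (vv α β i s) * Phi d s t * vv α β k t := by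
    intro s t
    rw [amat_apply]
    by_cases h : s = t <;> simp [h] <;> ring
  simp only [expand, Finset.sum_add_distrib, Finset.sum_sub_distrib, ← Finset.mul_sum]
  rw [sum_phi]
  have : ∑ s : Fin d × Fin d, ∑ t : Fin d × Fin d,
      (if s = t then conj' (vv α β i s) * vv α β k t else 0) = TT α β i k := by
    rw [← sum_conj_vv α β i k]
    refine Finset.sum_congr rfl fun s _ => ?_
    simp
  rw [this]

lemma pv_inner (hd : 0 < d) (i k : Fin d) :
    ∑ s : Fin d × Fin d, conj' (Pv α β i s) * Pv α β k s
      = TT α β i k - conj' (cc α β i) * cc α β k / d := by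
  have hdc : (d : ℂ) ≠ 0 := Nat.cast_ne_zero.2 hd.ne'
  have expand : ∀ s : Fin d × Fin d, conj' (Pv α β i s) * Pv α β k s
      = conj' (vv α β i s) * vv α β k s
        - (if s.1 = s.2 then vv α β k s else 0) * (conj' (cc α β i) / d)
        - (if s.1 = s.2 then conj' (vv α β i s) else 0) * (cc α β k / d)
        + (if s.1 = s.2 then 1 else 0) * (conj' (cc α β i) * cc α β k / d^2) := by
    intro s
    simp only [Pv]
    by_cases h : s.1 = s.2 <;> simp [h, map_div₀, _root_.map_mul] <;> ring
  simp only [expand, Finset.sum_add_distrib, Finset.sum_sub_distrib, ← Finset.sum_mul]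
  rw [sum_conj_vv, sum_diag_vv, sum_diag_conj]
  have h3 : ∑ s : Fin d × Fin d, (if s.1 = s.2 then (1:ℂ) else 0) = d := by
    rw [Fintype.sum_prod_type]
    have : ∀ p : Fin d, (∑ q : Fin d, if (p,q).1 = (p,q).2 then (1:ℂ) else 0) = 1 := by
      intro p; simp
    rw [Finset.sum_congr rfl fun p _ => this p]
    simp
  rw [h3]
  field_simp
  ring

end aux

open Finset in
lemma normSq_sum_le {d : ℕ} (z : Fin d → ℂ) :
    Complex.normSq (∑ i, z i) ≤ d * ∑ i, Complex.normSq (z i) := by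
  calc Complex.normSq (∑ i, z i) = (‖∑ i, z i‖)^2 := (Complex.sq_norm _).symm
    _ ≤ (∑ i, ‖z i‖)^2 := by
        apply pow_le_pow_left₀ (norm_nonneg _)
        exact norm_sum_le _ _
    _ ≤ (Finset.univ.card : ℝ) * ∑ i, (‖z i‖)^2 := sq_sum_le_card_mul_sum_sq
    _ = d * ∑ i, Complex.normSq (z i) := by simp [Complex.sq_norm, Finset.card_univ]


/-- Matrix-theoretic core of Lemma 3 (one-shot case): ⟨x, A x⟩ = 0 iff for each basis index i,
at most one of α_i, β_i is nonzero. -/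
theorem stmt_1 (d : ℕ) (hd : 2 ≤ d)
    (α β : Fin d → (Fin d → ℂ))
    (x : Fin d × (Fin d × Fin d) → ℂ)
    (hx : ∀ i : Fin d, ∀ p q : Fin d, x (i, (p, q)) = α i p * β i q) :
    (∑ s : Fin d × (Fin d × Fin d), ∑ s' : Fin d × (Fin d × Fin d),
        (starRingEnd ℂ) (x s) * Amat d s s' * x s') = 0 ↔
      ∀ i : Fin d, α i = 0 ∨ β i = 0 := by
  have hd0 : 0 < d := by omega
  have hdR : (0:ℝ) < d := by exact_mod_cast hd0
  have hDR : (0:ℝ) < (d:ℝ)^2 - 1 := by nlinarith [show (2:ℝ) ≤ d by exact_mod_cast hd]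
  have hdc : (d : ℂ) ≠ 0 := Nat.cast_ne_zero.2 hd0.ne'
  have hDc : ((d:ℂ)^2 - 1) ≠ 0 := by
    have : ((d:ℝ)^2 - 1 : ℂ) ≠ 0 := by exact_mod_cast hDR.ne'
    push_cast at this
    exact this
  constructor
  · -- forward direction
    intro hQ
    -- rewrite Q in block form
    have hxv : ∀ s : Fin d × (Fin d × Fin d), x s = vv α β s.1 s.2 := by
      rintro ⟨i, p, q⟩; exact hx i p q
    set C : ℂ := ∑ i, cc α β i with hC
    have step1 : (∑ s : Fin d × (Fin d × Fin d), ∑ s' : Fin d × (Fin d × Fin d),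
        (starRingEnd ℂ) (x s) * Amat d s s' * x s')
        = ∑ i : Fin d, ∑ k : Fin d,
            ((aCoef d i k : ℂ) * (TT α β i k - (starRingEnd ℂ) (cc α β i) * cc α β k / d)
              + (starRingEnd ℂ) (cc α β i) * cc α β k / d) := by
      rw [Fintype.sum_prod_type]
      refine Finset.sum_congr rfl fun i _ => ?_
      have inner : ∀ s : Fin d × Fin d,
          (∑ s' : Fin d × (Fin d × Fin d),
            (starRingEnd ℂ) (x (i, s)) * Amat d (i, s) s' * x s')
          = ∑ k : Fin d, ∑ t : Fin d × Fin d,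
              (starRingEnd ℂ) (vv α β i s) * Amat d (i, s) (k, t) * vv α β k t := by
        intro s
        rw [Fintype.sum_prod_type]
        refine Finset.sum_congr rfl fun k _ => Finset.sum_congr rfl fun t _ => ?_
        rw [hxv (i, s), hxv (k, t)]
      rw [Finset.sum_congr rfl fun s _ => inner s, Finset.sum_comm]
      exact Finset.sum_congr rfl fun k _ => block_sum α β i k
    -- coefficient decomposition
    have acast : ∀ i k : Fin d, (aCoef d i k : ℂ)
        = (d:ℂ)^2/((d:ℂ)^2-1) * (if i = k then 1 else 0) - 1/((d:ℂ)^2-1) := by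
      intro i k
      by_cases h : i = k <;> simp [aCoef, h] <;> field_simp
    -- real quantities
    set σ : ℝ := ∑ i : Fin d, ∑ s : Fin d × Fin d, Complex.normSq (Pv α β i s) with hσ
    set ω : ℝ := ∑ s : Fin d × Fin d, Complex.normSq (∑ i, Pv α β i s) with hω
    have σconj : ∀ i : Fin d, ∑ s : Fin d × Fin d,
        (starRingEnd ℂ) (Pv α β i s) * Pv α β i s
        = ((∑ s : Fin d × Fin d, Complex.normSq (Pv α β i s) : ℝ) : ℂ) := by
      intro i
      push_cast
      exact Finset.sum_congr rfl fun s _ => (Complex.normSq_eq_conj_mul_self).symm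
    have step2 : ∑ i : Fin d, ∑ k : Fin d,
            ((aCoef d i k : ℂ) * (TT α β i k - (starRingEnd ℂ) (cc α β i) * cc α β k / d)
              + (starRingEnd ℂ) (cc α β i) * cc α β k / d)
        = (d:ℂ)^2/((d:ℂ)^2-1) * (σ : ℂ) - 1/((d:ℂ)^2-1) * (ω : ℂ)
            + (starRingEnd ℂ) C * C / d := by
      have hw : ∀ i k, TT α β i k - (starRingEnd ℂ) (cc α β i) * cc α β k / d
          = ∑ s : Fin d × Fin d, (starRingEnd ℂ) (Pv α β i s) * Pv α β k s :=
        fun i k => (pv_inner α β hd0 i k).symm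
      simp only [acast, hw, sub_mul, Finset.sum_add_distrib, Finset.sum_sub_distrib]
      congr 1
      · congr 1
        · -- diagonal part
          have hdiag : ∀ i : Fin d, ∑ k : Fin d,
              (d:ℂ)^2/((d:ℂ)^2-1) * (if i = k then 1 else 0)
                * (∑ s : Fin d × Fin d, (starRingEnd ℂ) (Pv α β i s) * Pv α β k s)
              = (d:ℂ)^2/((d:ℂ)^2-1)
                * ((∑ s : Fin d × Fin d, Complex.normSq (Pv α β i s) : ℝ) : ℂ) := by
            intro i
            rw [Finset.sum_eq_single i]
            · rw [σconj i]; simp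
            · intro k _ hk; simp [Ne.symm hk]
            · simp
          rw [Finset.sum_congr rfl fun i _ => hdiag i, ← Finset.mul_sum]
          congr 1
          rw [hσ]
          push_cast
          rfl
        · -- full-sum part
          have key : ∑ i : Fin d, ∑ k : Fin d,
              ∑ s : Fin d × Fin d, (starRingEnd ℂ) (Pv α β i s) * Pv α β k s = (ω : ℂ) := by
            calc ∑ i : Fin d, ∑ k : Fin d,
                ∑ s : Fin d × Fin d, (starRingEnd ℂ) (Pv α β i s) * Pv α β k s
                = ∑ i : Fin d, ∑ s : Fin d × Fin d, ∑ k : Fin d,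
                    (starRingEnd ℂ) (Pv α β i s) * Pv α β k s :=
                  Finset.sum_congr rfl fun i _ => Finset.sum_comm
              _ = ∑ s : Fin d × Fin d, ∑ i : Fin d, ∑ k : Fin d,
                    (starRingEnd ℂ) (Pv α β i s) * Pv α β k s := Finset.sum_comm
              _ = ∑ s : Fin d × Fin d,
                    ((Complex.normSq (∑ i, Pv α β i s) : ℝ) : ℂ) := by
                  refine Finset.sum_congr rfl fun s _ => ?_
                  rw [Complex.normSq_eq_conj_mul_self, map_sum, Finset.sum_mul_sum]
              _ = (ω : ℂ) := by rw [hω]; push_cast; rfl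
          simp only [← Finset.mul_sum]
          rw [key]
      · -- Phi part
        rw [hC, map_sum, Finset.sum_mul_sum, Finset.sum_div]
        refine Finset.sum_congr rfl fun i _ => ?_
        rw [Finset.sum_div]
    rw [step1, step2] at hQ
    -- turn into a real equation
    set κ : ℝ := Complex.normSq C with hκ
    have hQr : ((d:ℝ)^2/((d:ℝ)^2-1) * σ - 1/((d:ℝ)^2-1) * ω + κ/d : ℝ) = 0 := by
      have : (((d:ℝ)^2/((d:ℝ)^2-1) * σ - 1/((d:ℝ)^2-1) * ω + κ/d : ℝ) : ℂ) = 0 := by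
        push_cast
        rw [← hQ]
        congr 1
        rw [hκ, Complex.normSq_eq_conj_mul_self]
      exact_mod_cast this
    -- nonnegativity facts
    have hσ0 : 0 ≤ σ := Finset.sum_nonneg fun i _ =>
      Finset.sum_nonneg fun s _ => Complex.normSq_nonneg _
    have hκ0 : 0 ≤ κ := Complex.normSq_nonneg _
    have hωd : ω ≤ d * σ := by
      calc ω = ∑ s : Fin d × Fin d, Complex.normSq (∑ i, Pv α β i s) := hω
        _ ≤ ∑ s : Fin d × Fin d, (d : ℝ) * ∑ i, Complex.normSq (Pv α β i s) :=
            Finset.sum_le_sum fun s _ => normSq_sum_le _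
        _ = (d:ℝ) * ∑ s : Fin d × Fin d, ∑ i, Complex.normSq (Pv α β i s) := by
            rw [Finset.mul_sum]
        _ = (d:ℝ) * σ := by rw [hσ, Finset.sum_comm]
    -- hence σ = 0
    have hσz : σ = 0 := by
      have e1 : (d:ℝ)^2/((d:ℝ)^2-1) * σ - 1/((d:ℝ)^2-1) * ω
          = 1/((d:ℝ)^2-1) * ((d:ℝ)^2*σ - ω) := by ring
      have h5 : 1/((d:ℝ)^2-1) * ((d:ℝ)^2*σ - ω) ≤ 0 := by
        rw [← e1]
        have : 0 ≤ κ/d := div_nonneg hκ0 hdR.le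
        linarith
      have h6 : (d:ℝ)^2*σ - ω ≤ 0 := by
        by_contra hpos
        push_neg at hpos
        have := mul_pos (show (0:ℝ) < 1/((d:ℝ)^2-1) by positivity) hpos
        linarith
      have hd2 : (2:ℝ) ≤ (d:ℝ) := by exact_mod_cast hd
      by_contra hne
      have hpos : 0 < σ := lt_of_le_of_ne hσ0 (Ne.symm hne)
      have hq : 0 < ((d:ℝ)^2 - d) * σ := mul_pos (by nlinarith) hpos
      nlinarith
    -- hence Pv = 0 everywhere
    have hPv : ∀ i : Fin d, ∀ s : Fin d × Fin d, Pv α β i s = 0 := by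
      intro i s
      have h1 : ∀ i ∈ Finset.univ, (0:ℝ) ≤ ∑ s : Fin d × Fin d, Complex.normSq (Pv α β i s) :=
        fun i _ => Finset.sum_nonneg fun s _ => Complex.normSq_nonneg _
      have hσz' : ∑ i : Fin d, ∑ s : Fin d × Fin d, Complex.normSq (Pv α β i s) = 0 := by
        rw [hσ] at hσz; exact hσz
      have h3 : ∑ s : Fin d × Fin d, Complex.normSq (Pv α β i s) = 0 :=
        (Finset.sum_eq_zero_iff_of_nonneg h1).1 hσz' i (Finset.mem_univ i)
      have h4 := (Finset.sum_eq_zero_iff_of_nonneg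
        (fun s _ => Complex.normSq_nonneg (Pv α β i s))).1 h3 s (Finset.mem_univ s)
      exact Complex.normSq_eq_zero.1 h4
    -- value structure
    have hval : ∀ i : Fin d, ∀ p q : Fin d,
        α i p * β i q = if p = q then cc α β i / d else 0 := by
      intro i p q
      have := hPv i (p, q)
      rw [Pv, sub_eq_zero] at this
      exact this
    -- conclude
    intro i
    by_contra hcon
    push_neg at hcon
    obtain ⟨hα, hβ⟩ := hcon
    obtain ⟨p0, hp0⟩ := Function.ne_iff.1 hα
    obtain ⟨q0, hq0⟩ := Function.ne_iff.1 hβ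
    simp only [Pi.zero_apply] at hp0 hq0
    have h1 : α i p0 * β i q0 ≠ 0 := mul_ne_zero hp0 hq0
    have h2 := hval i p0 q0
    by_cases hpq : p0 = q0
    · subst hpq
      rw [if_pos rfl] at h2
      have hcne : cc α β i / d ≠ 0 := h2 ▸ h1
      -- pick p1 ≠ p0
      have : ∃ p1 : Fin d, p1 ≠ p0 := by
        by_cases h : p0 = ⟨0, hd0⟩
        · exact ⟨⟨1, hd⟩, by simp [h, Fin.ext_iff]⟩
        · exact ⟨⟨0, hd0⟩, fun hc => h hc.symm⟩
      obtain ⟨p1, hp1⟩ := this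
      have h3 := hval i p1 p1
      rw [if_pos rfl] at h3
      have hβ1 : β i p1 ≠ 0 := by
        intro hz
        rw [hz, mul_zero] at h3
        exact hcne h3.symm
      have h4 := hval i p0 p1
      rw [if_neg (fun hc => hp1 hc.symm)] at h4
      exact (mul_ne_zero hp0 hβ1) h4
    · rw [if_neg hpq] at h2
      exact h1 h2
  · -- backward direction
    intro h
    have hx0 : ∀ s : Fin d × (Fin d × Fin d), x s = 0 := by
      rintro ⟨i, p, q⟩
      rw [hx]
      rcases h i with h' | h' <;> simp [h']
    refine Finset.sum_eq_zero fun s _ => Finset.sum_eq_zero fun s' _ => ?_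
    rw [hx0 s, hx0 s']
    simp
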